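/- Let F be an algebraically closed field of characteristic zero and let m ≥ 1. Let p_1, …, p_m ∈ F[x] be univariate polynomials such that the set {1, p_1, …, p_m} is linearly independent over F. Then the polynomial map L : F → F^m given by L(x) = (p_1(x), p_2(x), …, p_m(x)) is (m−1, 1)-elusive: for every polynomial map M : F^{m−1} → F^m all of whose coordinate functions are polynomials of degree at most 1, the image of L is not contained in the image of M. -/

import Mathlib

open MvPolynomial Finset in
lemma eval_of_totalDegree_le_one {F : Type*} [CommRing F] {n : ℕ}
    (q : MvPolynomial (Fin n) F) (hq : q.totalDegree ≤ 1) (y : Fin n → F) :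
    MvPolynomial.eval y q = q.coeff 0 + ∑ i, q.coeff (Finsupp.single i 1) * y i := by
  classical
  set T : Finset ((Fin n) →₀ ℕ) :=
    insert 0 (Finset.image (fun i => Finsupp.single i 1) Finset.univ) with hT
  have hsub : q.support ⊆ T := by
    intro d hd
    have hdeg : (d.sum fun _ k => k) ≤ 1 :=
      le_trans (MvPolynomial.le_totalDegree hd) hq
    rcases eq_or_ne d 0 with h0 | h0
    · simp [hT, h0]
    · obtain ⟨i, hi⟩ := Finsupp.ne_iff.mp h0
      have hi' : i ∈ d.support := Finsupp.mem_support_iff.mpr (by simpa using hi)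
      have h1 : d i ≤ d.sum fun _ k => k :=
        Finset.single_le_sum (fun _ _ => Nat.zero_le _) hi'
      have hdi : d i = 1 := le_antisymm (h1.trans hdeg) (Nat.one_le_iff_ne_zero.mpr (by simpa using hi))
      have hrest : ∀ j ∈ d.support.erase i, d j = 0 := by
        intro j hj
        have := Finset.add_sum_erase _ d hi'
        have hsum : d i + ∑ k ∈ d.support.erase i, d k ≤ 1 := by
          rw [this]; simpa [Finsupp.sum] using hdeg
        have : ∑ k ∈ d.support.erase i, d k = 0 := by omega
        exact (Finset.sum_eq_zero_iff.mp this) j hj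
      have hdeq : d = Finsupp.single i 1 := by
        ext j
        rcases eq_or_ne j i with rfl | hji
        · simp [hdi]
        · rw [Finsupp.single_apply, if_neg (fun h => hji h.symm)]
          by_cases hjs : j ∈ d.support
          · exact hrest j (Finset.mem_erase.mpr ⟨hji, hjs⟩)
          · simpa using hjs
      simp [hT, hdeq]
  rw [MvPolynomial.eval_eq]
  rw [Finset.sum_subset hsub (fun d _ hd => by
    simp [MvPolynomial.mem_support_iff, not_not] at hd; simp [hd])]
  rw [hT, Finset.sum_insert (by simp [Finsupp.single_eq_zero]),
    Finset.sum_image (fun i _ j _ h => by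
      simpa using (Finsupp.single_left_injective one_ne_zero) h)]
  congr 1
  · simp
  · refine Finset.sum_congr rfl fun i _ => ?_
    congr 1
    rw [Finset.prod_eq_single i (fun j _ hj => by simp [Finsupp.single_apply, hj.symm, Finsupp.single_apply_eq_zero]) (by simp)]
    simp


/-- Proposition `elus-indep`: any polynomial curve `L : F → F^m`,
`x ↦ (p₁(x), …, p_m(x))`, whose coordinate polynomials together with `1` are linearly
independent over `F`, is `(m-1, 1)`-elusive: for every polynomial map
`M : F^{m-1} → F^m` whose coordinate polynomials all have total degree at most `1`, the
image of `L` is not contained in the image of `M`. -/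
theorem independent_curve_is_elusive
    {F : Type*} [Field F] [IsAlgClosed F] [CharZero F] {m : ℕ} (hm : 1 ≤ m)
    (p : Fin m → Polynomial F)
    (hindep : LinearIndependent F (Fin.cons (1 : Polynomial F) p : Fin (m + 1) → Polynomial F))
    (M : Fin m → MvPolynomial (Fin (m - 1)) F)
    (hdeg : ∀ j, (M j).totalDegree ≤ 1) :
    ¬ (Set.range (fun x : F => fun j : Fin m => (p j).eval x) ⊆
        Set.range (fun y : Fin (m - 1) → F => fun j : Fin m => MvPolynomial.eval y (M j))) := by
  classical
  intro hsub
  -- linear part matrix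
  set B : Matrix (Fin (m - 1)) (Fin m) F :=
    fun i j => (M j).coeff (Finsupp.single i 1) with hB
  have hninj : ¬ Function.Injective B.mulVecLin := by
    intro h
    have := LinearMap.finrank_le_finrank_of_injective h
    simp [Module.finrank_pi] at this
    omega
  obtain ⟨u, v, huv, hne⟩ := Function.not_injective_iff.mp hninj
  set c : Fin m → F := u - v with hc
  have hc0 : c ≠ 0 := sub_ne_zero_of_ne hne
  have hker : B.mulVecLin c = 0 := by
    rw [hc, map_sub, huv, sub_self]
  have hker' : ∀ i, ∑ j, (M j).coeff (Finsupp.single i 1) * c j = 0 := by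
    intro i
    have := congrFun hker i
    rw [Matrix.mulVecLin_apply] at this
    simpa [Matrix.mulVecLin_apply, Matrix.mulVec, dotProduct, hB] using this
  set β : F := ∑ j, c j * (M j).coeff 0 with hβ
  have key : ∀ x : F, Polynomial.eval x (∑ j, Polynomial.C (c j) * p j) = β := by
    intro x
    obtain ⟨y, hy⟩ := hsub (Set.mem_range_self x)
    have hy' : ∀ j, (p j).eval x = MvPolynomial.eval y (M j) := fun j => (congrFun hy j).symm
    have : ∑ j, c j * (p j).eval x
        = ∑ j, c j * ((M j).coeff 0 + ∑ i, (M j).coeff (Finsupp.single i 1) * y i) := by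
      refine Finset.sum_congr rfl fun j _ => ?_
      rw [hy' j, eval_of_totalDegree_le_one (M j) (hdeg j) y]
    rw [Polynomial.eval_finset_sum]
    simp only [Polynomial.eval_mul, Polynomial.eval_C]
    rw [this]
    simp only [mul_add, Finset.sum_add_distrib, Finset.mul_sum]
    rw [Finset.sum_comm (t := Finset.univ) (s := Finset.univ)]
    have : ∀ i : Fin (m-1), ∑ j, c j * ((M j).coeff (Finsupp.single i 1) * y i) = 0 := by
      intro i
      have := hker' i
      calc ∑ j, c j * ((M j).coeff (Finsupp.single i 1) * y i)
          = (∑ j, (M j).coeff (Finsupp.single i 1) * c j) * y i := by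
            rw [Finset.sum_mul]; refine Finset.sum_congr rfl fun j _ => by ring
        _ = 0 := by rw [this, zero_mul]
    rw [Finset.sum_congr rfl fun i _ => this i]
    simp [hβ]
  have hpoly : (∑ j, Polynomial.C (c j) * p j) = Polynomial.C β :=
    Polynomial.funext fun x => by rw [key x, Polynomial.eval_C]
  have hzero : ∑ i : Fin (m + 1),
      (Fin.cons (-β) c : Fin (m+1) → F) i • (Fin.cons (1 : Polynomial F) p : Fin (m+1) → Polynomial F) i = 0 := by
    rw [Fin.sum_univ_succ]
    simp only [Fin.cons_zero, Fin.cons_succ]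
    have : ∑ j : Fin m, c j • p j = Polynomial.C β := by
      rw [← hpoly]
      exact Finset.sum_congr rfl fun j _ => Polynomial.smul_eq_C_mul (c j)
    rw [this]
    simp [Polynomial.smul_eq_C_mul, map_neg]
  have hall := Fintype.linearIndependent_iff.mp hindep _ hzero
  apply hc0
  funext j
  simpa [Fin.cons_succ] using hall j.succ
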